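/- Let A₀,...,A₄ and B₀,...,B₄ be orthogonal projections on a finite-dimensional Hilbert space with A_i B_i = B_i A_i = 0 for each i (indices mod 5), and let P be an orthogonal projection such that (A_i + B_i)P = P for every i, A_i A_{i+1} = 0 and B_i B_{i+1} = 0 for every i (mod 5). Then P = 0. -/

import Mathlib

/-- **Quantum 5-cycle localization (operator core of the A-gadget lemma).**
Let `A₀, …, A₄`, `B₀, …, B₄` and `P` be orthogonal projections (self-adjoint
idempotents) on a finite-dimensional complex Hilbert space, with indices mod 5,
such that `Aᵢ Bᵢ = Bᵢ Aᵢ = 0`, `(Aᵢ + Bᵢ) P = P`, `Aᵢ Aᵢ₊₁ = 0` and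
`Bᵢ Bᵢ₊₁ = 0` for every `i`.  Then `P = 0`. -/
theorem five_cycle_localization
    {V : Type*} [NormedAddCommGroup V] [InnerProductSpace ℂ V]
    [FiniteDimensional ℂ V]
    (A B : ZMod 5 → Module.End ℂ V) (P : Module.End ℂ V)
    (hAsa : ∀ i, LinearMap.IsSymmetric (A i))
    (hAidem : ∀ i, A i * A i = A i)
    (hBsa : ∀ i, LinearMap.IsSymmetric (B i))
    (hBidem : ∀ i, B i * B i = B i)
    (hPsa : LinearMap.IsSymmetric P)
    (hPidem : P * P = P)
    (hAB : ∀ i, A i * B i = 0)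
    (hBA : ∀ i, B i * A i = 0)
    (hCP : ∀ i, (A i + B i) * P = P)
    (hAA : ∀ i, A i * A (i + 1) = 0)
    (hBB : ∀ i, B i * B (i + 1) = 0) :
    P = 0 := by
  set S : ZMod 5 → Module.End ℂ V := fun i => A i - B i with hS
  have hSsa : ∀ i, LinearMap.IsSymmetric (S i) := fun i => (hAsa i).sub (hBsa i)
  -- S i * S i * P = P
  have hS2 : ∀ i, S i * (S i * P) = P := by
    intro i
    have e : S i * S i = A i + B i := by
      have : S i * S i =
          A i * A i - A i * B i - B i * A i + B i * B i := by
        simp only [hS]; noncomm_ring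
      rw [this, hAidem i, hAB i, hBA i, hBidem i]
      abel
    rw [← mul_assoc, e, hCP i]
  -- S i * S (i+1) * P = -P
  have hSS : ∀ i, S i * (S (i + 1) * P) = -P := by
    intro i
    have e1 : S i * S (i + 1) = -(A i * B (i + 1) + B i * A (i + 1)) := by
      have : S i * S (i + 1) =
          A i * A (i + 1) - A i * B (i + 1) - B i * A (i + 1)
            + B i * B (i + 1) := by
        simp only [hS]; noncomm_ring
      rw [this, hAA i, hBB i]; abel
    have e2 : (A i * B (i + 1) + B i * A (i + 1)) * P = P := by
      have e3 : (A i + B i) * ((A (i + 1) + B (i + 1)) * P) = P := by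
        rw [hCP (i + 1), hCP i]
      have e4 : (A i + B i) * (A (i + 1) + B (i + 1)) =
          A i * B (i + 1) + B i * A (i + 1) := by
        have : (A i + B i) * (A (i + 1) + B (i + 1)) =
            A i * A (i + 1) + A i * B (i + 1) + B i * A (i + 1)
              + B i * B (i + 1) := by noncomm_ring
        rw [this, hAA i, hBB i]; abel
      rw [← e4, mul_assoc]
      exact e3
    rw [← mul_assoc, e1, neg_mul, e2]
  -- pointwise argument
  ext x
  simp only [LinearMap.zero_apply]
  set p : V := P x with hp
  set v : ZMod 5 → V := fun i => S i p with hv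
  have hvv : ∀ i, S i (v i) = p := by
    intro i
    have := congrArg (fun (T : Module.End ℂ V) => T x) (hS2 i)
    simpa [hv, hp, Module.End.mul_apply] using this
  have hvw : ∀ i, S i (v (i + 1)) = -p := by
    intro i
    have := congrArg (fun (T : Module.End ℂ V) => T x) (hSS i)
    simpa [hv, hp, Module.End.mul_apply] using this
  have hinner_self : ∀ i, (inner ℂ (v i) (v i) : ℂ) = inner ℂ p p := by
    intro i
    calc (inner ℂ (v i) (v i) : ℂ) = inner ℂ p (S i (v i)) := hSsa i p (v i)
      _ = inner ℂ p p := by rw [hvv i]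
  have hinner_cross : ∀ i, (inner ℂ (v i) (v (i + 1)) : ℂ) = -inner ℂ p p := by
    intro i
    calc (inner ℂ (v i) (v (i + 1)) : ℂ)
        = inner ℂ p (S i (v (i + 1))) := hSsa i p (v (i + 1))
      _ = -inner ℂ p p := by rw [hvw i]; exact inner_neg_right p p
  have hinner_cross' : ∀ i, (inner ℂ (v (i + 1)) (v i) : ℂ) = -inner ℂ p p := by
    intro i
    have := congrArg (starRingEnd ℂ) (hinner_cross i)
    rwa [inner_conj_symm, map_neg, inner_conj_symm] at this
  -- neighbours are negatives of each other
  have hneg : ∀ i, v (i + 1) = -v i := by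
    intro i
    have hz : (inner ℂ (v i + v (i + 1)) (v i + v (i + 1)) : ℂ) = 0 := by
      rw [inner_add_add_self, hinner_self i, hinner_self (i + 1),
        hinner_cross i, hinner_cross' i]
      ring
    exact eq_neg_of_add_eq_zero_right (inner_self_eq_zero.mp hz)
  -- odd cycle forces v 0 = 0
  have h40 : (4 + 1 : ZMod 5) = 0 := by decide
  have e1 : v 1 = -v 0 := by simpa using hneg 0
  have e2 : v 2 = -v 1 := by have := hneg 1; rwa [show (1 + 1 : ZMod 5) = 2 by decide] at this
  have e3 : v 3 = -v 2 := by have := hneg 2; rwa [show (2 + 1 : ZMod 5) = 3 by decide] at this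
  have e4 : v 4 = -v 3 := by have := hneg 3; rwa [show (3 + 1 : ZMod 5) = 4 by decide] at this
  have e0 : v 0 = -v 4 := by have := hneg 4; rwa [h40] at this
  have hv0 : v 0 = 0 := by
    have hvneg : v 0 = -v 0 := by
      calc v 0 = -v 4 := e0
        _ = -(-v 3) := by rw [e4]
        _ = -(-(-v 2)) := by rw [e3]
        _ = -(-(-(-v 1))) := by rw [e2]
        _ = -(-(-(-(-v 0)))) := by rw [e1]
        _ = -v 0 := by abel
    have h2 : (2 : ℂ) • v 0 = 0 := by
      rw [two_smul]; nth_rewrite 2 [hvneg]; abel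
    exact (smul_eq_zero.mp h2).resolve_left (by norm_num)
  have hpp : (inner ℂ p p : ℂ) = 0 := by
    rw [← hinner_self 0, hv0, inner_zero_left]
  exact inner_self_eq_zero.mp hpp
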